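/- Let A : ℝ^{m×n} → ℝ^p satisfy the rank-RIP with constant δ_k, and let S₁, S₂ be sets of orthonormal rank-1 matrices such that rank(P_{S₁∪S₂} X) ≤ k for all X ∈ ℝ^{m×n}. Then for every X ∈ span(S₂), ‖P_{S₁} A* A P_{S₁⊥} X‖_F ≤ δ_k ‖P_{S₁⊥} X‖_F. -/

import Mathlib

open scoped BigOperators

noncomputable def frobInner {m n : ℕ} (X Y : Matrix (Fin m) (Fin n) ℝ) : ℝ :=
  ∑ i, ∑ j, X i j * Y i j

noncomputable def frobNorm {m n : ℕ} (X : Matrix (Fin m) (Fin n) ℝ) : ℝ :=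
  Real.sqrt (frobInner X X)

lemma frobInner_comm {m n : ℕ} (X Y : Matrix (Fin m) (Fin n) ℝ) :
    frobInner X Y = frobInner Y X := by
  simp [frobInner, mul_comm]

lemma frobInner_add_left {m n : ℕ} (X Y Z : Matrix (Fin m) (Fin n) ℝ) :
    frobInner (X + Y) Z = frobInner X Z + frobInner Y Z := by
  simp [frobInner, Matrix.add_apply, add_mul, Finset.sum_add_distrib]

lemma frobInner_sub_left {m n : ℕ} (X Y Z : Matrix (Fin m) (Fin n) ℝ) :
    frobInner (X - Y) Z = frobInner X Z - frobInner Y Z := by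
  simp [frobInner, Matrix.sub_apply, sub_mul, Finset.sum_sub_distrib]

lemma frobInner_smul_left {m n : ℕ} (c : ℝ) (X Y : Matrix (Fin m) (Fin n) ℝ) :
    frobInner (c • X) Y = c * frobInner X Y := by
  simp [frobInner, Matrix.smul_apply, smul_eq_mul, mul_assoc, Finset.mul_sum]

lemma frobInner_self_nonneg {m n : ℕ} (X : Matrix (Fin m) (Fin n) ℝ) :
    0 ≤ frobInner X X := by
  apply Finset.sum_nonneg; intro i _
  exact Finset.sum_nonneg fun j _ => mul_self_nonneg _

lemma frobNorm_sq {m n : ℕ} (X : Matrix (Fin m) (Fin n) ℝ) :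
    frobNorm X ^ 2 = frobInner X X :=
  Real.sq_sqrt (frobInner_self_nonneg X)

lemma frobNorm_nonneg {m n : ℕ} (X : Matrix (Fin m) (Fin n) ℝ) : 0 ≤ frobNorm X :=
  Real.sqrt_nonneg _

lemma frobInner_expand_add {m n : ℕ} (U V : Matrix (Fin m) (Fin n) ℝ) :
    frobInner (U + V) (U + V)
      = frobInner U U + 2 * frobInner U V + frobInner V V := by
  have h : ∀ i j, (U + V) i j * (U + V) i j
      = U i j * U i j + 2 * (U i j * V i j) + V i j * V i j := by
    intro i j; simp [Matrix.add_apply]; ring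
  simp only [frobInner, h, Finset.sum_add_distrib, Finset.mul_sum]

lemma frobInner_expand_sub {m n : ℕ} (U V : Matrix (Fin m) (Fin n) ℝ) :
    frobInner (U - V) (U - V)
      = frobInner U U - 2 * frobInner U V + frobInner V V := by
  have h : ∀ i j, (U - V) i j * (U - V) i j
      = U i j * U i j - 2 * (U i j * V i j) + V i j * V i j := by
    intro i j; simp [Matrix.sub_apply]; ring
  simp only [frobInner, h, Finset.sum_add_distrib, Finset.sum_sub_distrib,
    Finset.mul_sum]

/-- Cross-subspace RIP bound: if `P₁`, `P₂` project onto `span(S₁)`, `span(S₂)` and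
`Q` projects onto `span(S₁ ∪ S₂)` with `rank (Q X) ≤ k` for all `X`, then for
every `X ∈ span(S₂)`, `‖P₁ A* A P₁⊥ X‖_F ≤ δ_k ‖P₁⊥ X‖_F`. -/
theorem rip_cross_subspace_bound {m n p k : ℕ}
    (δ : ℝ)
    (A : Matrix (Fin m) (Fin n) ℝ →ₗ[ℝ] EuclideanSpace ℝ (Fin p))
    (hRIP : ∀ X : Matrix (Fin m) (Fin n) ℝ, X.rank ≤ k →
      (1 - δ) * frobNorm X ^ 2 ≤ ‖A X‖ ^ 2 ∧ ‖A X‖ ^ 2 ≤ (1 + δ) * frobNorm X ^ 2)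
    (Astar : EuclideanSpace ℝ (Fin p) →ₗ[ℝ] Matrix (Fin m) (Fin n) ℝ)
    (hadj : ∀ (X : Matrix (Fin m) (Fin n) ℝ) (v : EuclideanSpace ℝ (Fin p)),
      (inner ℝ (A X) v : ℝ) = frobInner X (Astar v))
    (P₁ P₂ Q : Matrix (Fin m) (Fin n) ℝ →ₗ[ℝ] Matrix (Fin m) (Fin n) ℝ)
    (hP₁idem : ∀ X, P₁ (P₁ X) = P₁ X)
    (hP₁sa : ∀ X Y, frobInner (P₁ X) Y = frobInner X (P₁ Y))
    (hP₂idem : ∀ X, P₂ (P₂ X) = P₂ X)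
    (hP₂sa : ∀ X Y, frobInner (P₂ X) Y = frobInner X (P₂ Y))
    (hQidem : ∀ X, Q (Q X) = Q X)
    (hQsa : ∀ X Y, frobInner (Q X) Y = frobInner X (Q Y))
    (hQP₁ : ∀ X, Q (P₁ X) = P₁ X)
    (hQP₂ : ∀ X, Q (P₂ X) = P₂ X)
    (hQrank : ∀ X, (Q X).rank ≤ k)
    (X : Matrix (Fin m) (Fin n) ℝ) (hX : P₂ X = X) :
    frobNorm (P₁ (Astar (A (X - P₁ X)))) ≤ δ * frobNorm (X - P₁ X) := by
  set Z : Matrix (Fin m) (Fin n) ℝ := X - P₁ X with hZdef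
  -- basic invariances (proved before making Z opaque)
  have hQZ : Q Z = Z := by
    have hQX : Q X = X := by rw [← hX, hQP₂, hX]
    rw [hZdef, map_sub, hQX, hQP₁]
  have hP₁Z : P₁ Z = 0 := by
    rw [hZdef, map_sub, hP₁idem, sub_self]
  clear_value Z
  clear hZdef hX
  set T : Matrix (Fin m) (Fin n) ℝ := Astar (A Z) with hTdef
  set Y : Matrix (Fin m) (Fin n) ℝ := P₁ T with hYdef
  have hQY : Q Y = Y := hQP₁ T
  have hrankZ : Z.rank ≤ k := by rw [← hQZ]; exact hQrank Z
  -- Y ⊥ Z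
  have hYZ : frobInner Y Z = 0 := by
    rw [hYdef, hP₁sa, hP₁Z, frobInner_comm]
    simp [frobInner]
  -- frobInner Y T = ‖Y‖²
  have hYT : frobInner Y T = frobInner Y Y := by
    rw [frobInner_comm]
    conv_rhs => rw [hYdef, hP₁sa, hP₁idem]
  set N : ℝ := frobNorm Z with hNdef
  set M : ℝ := frobNorm Y with hMdef
  have hNnn : 0 ≤ N := frobNorm_nonneg Z
  have hMnn : 0 ≤ M := frobNorm_nonneg Y
  -- key inner product identity : ⟨A Y, A Z⟩ = M ^ 2
  have hinner : (inner ℝ (A Y) (A Z) : ℝ) = M ^ 2 := by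
    rw [hadj, ← hTdef, hYT, hMdef, frobNorm_sq]
  rcases eq_or_lt_of_le hNnn with hN0 | hNpos
  · -- degenerate case : frobNorm Z = 0
    have hAZ : ‖A Z‖ ^ 2 ≤ 0 := by
      have := (hRIP Z hrankZ).2
      rw [← hNdef, ← hN0] at this
      simpa using this
    have hAZ0 : A Z = 0 := by
      have : ‖A Z‖ = 0 := le_antisymm (by nlinarith [norm_nonneg (A Z)]) (norm_nonneg _)
      exact norm_eq_zero.mp this
    have hM0 : M = 0 := by
      have hYY : frobInner Y Y = 0 := by
        rw [← hYT, hTdef, hAZ0]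
        simp [frobInner]
      rw [hMdef, frobNorm, hYY, Real.sqrt_zero]
    rw [hM0, ← hN0, mul_zero]
  · -- main case : N > 0
    have hδnn : 0 ≤ δ := by
      obtain ⟨h1, h2⟩ := hRIP Z hrankZ
      rw [← hNdef] at h1 h2
      nlinarith [mul_pos hNpos hNpos]
    rcases eq_or_lt_of_le hMnn with hM0 | hMpos
    · rw [← hM0]
      exact mul_nonneg hδnn hNnn
    · -- scale Y to have norm N
      set c : ℝ := N / M with hcdef
      have hcpos : 0 < c := div_pos hNpos hMpos
      set W : Matrix (Fin m) (Fin n) ℝ := c • Y with hWdef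
      have hQW : Q W = W := by rw [hWdef, map_smul, hQY]
      -- rank bounds for W ± Z
      have hrWp : (W + Z).rank ≤ k := by
        have h : Q (W + Z) = W + Z := by rw [map_add, hQW, hQZ]
        rw [← h]; exact hQrank _
      have hrWm : (W - Z).rank ≤ k := by
        have h : Q (W - Z) = W - Z := by rw [map_sub, hQW, hQZ]
        rw [← h]; exact hQrank _
      -- Frobenius norms of W ± Z
      have hWW : frobInner W W = N ^ 2 := by
        rw [hWdef, frobInner_smul_left, frobInner_comm, frobInner_smul_left,
          ← frobNorm_sq, ← hMdef, hcdef]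
        field_simp
      have hWZ : frobInner W Z = 0 := by
        rw [hWdef, frobInner_smul_left, hYZ, mul_zero]
      have hnormWp : frobNorm (W + Z) ^ 2 = 2 * N ^ 2 := by
        rw [frobNorm_sq, frobInner_expand_add, hWW, hWZ, ← frobNorm_sq, ← hNdef]
        ring
      have hnormWm : frobNorm (W - Z) ^ 2 = 2 * N ^ 2 := by
        rw [frobNorm_sq, frobInner_expand_sub, hWW, hWZ, ← frobNorm_sq, ← hNdef]
        ring
      -- polarization identity
      have hpol : ‖A (W + Z)‖ ^ 2 - ‖A (W - Z)‖ ^ 2 = 4 * (inner ℝ (A W) (A Z) : ℝ) := by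
        rw [map_add, map_sub, @norm_add_sq_real, @norm_sub_sq_real]
        ring
      have hinnerW : (inner ℝ (A W) (A Z) : ℝ) = c * M ^ 2 := by
        rw [hWdef, map_smul, real_inner_smul_left, hinner]
      have hcM : c * M ^ 2 = N * M := by
        rw [hcdef]; field_simp
      obtain ⟨hlo, _⟩ := hRIP (W - Z) hrWm
      obtain ⟨_, hhi⟩ := hRIP (W + Z) hrWp
      rw [hnormWm] at hlo
      rw [hnormWp] at hhi
      have hkey : N * M ≤ δ * N ^ 2 := by
        rw [← hcM, ← hinnerW]
        linarith [hpol, hlo, hhi]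
      have h2 : N * M ≤ N * (δ * N) := by
        rw [show N * (δ * N) = δ * N ^ 2 by ring]; exact hkey
      exact le_of_mul_le_mul_left h2 hNpos
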